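/- Let k ≥ 1 and m ≥ 2 be integers, let b₁, …, b_k be nonzero real numbers, and let Q be a nonzero homogeneous real polynomial in x₁, …, x_k all of whose coefficients are nonnegative. Then the homogeneous polynomial P = (b₁x₁ + ⋯ + b_kx_k)^m · Q satisfies n(P) ≥ 2k − 1. -/

import Mathlib

open MvPolynomial

set_option maxHeartbeats 2000000

private lemma aux_pow_pred_mul {F : Type*} [Field F] (i : ℕ) (r : F) :
    (i : F) * r ^ (i - 1) * r = (i : F) * r ^ i := by
  cases i with
  | zero => simp
  | succ n => rw [Nat.add_sub_cancel, pow_succ]; push_cast; ring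

/-- A polynomial over a char-zero field with a nonzero double root has at least 3 terms. -/
private lemma aux_three_le_card {F : Type*} [Field F] [CharZero F] {p : Polynomial F}
    (hp : p ≠ 0) {r : F} (hr : r ≠ 0)
    (hdvd : (Polynomial.X - Polynomial.C r) ^ 2 ∣ p) : 3 ≤ p.support.card := by
  by_contra hcard
  push_neg at hcard
  have h1 : p.eval r = 0 := by
    obtain ⟨q, rfl⟩ := hdvd
    simp
  have h2 : (Polynomial.derivative p).eval r = 0 := by
    obtain ⟨q, rfl⟩ := hdvd
    simp [Polynomial.derivative_mul, Polynomial.derivative_pow]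
  have hne : p.support.card ≠ 0 := by
    simp only [ne_eq, Finset.card_eq_zero, Polynomial.support_eq_empty]
    exact hp
  have hcases : p.support.card = 1 ∨ p.support.card = 2 := by omega
  rcases hcases with h | h
  · obtain ⟨n, x, hx, rfl⟩ := Polynomial.card_support_eq_one.mp h
    simp only [Polynomial.eval_mul, Polynomial.eval_C, Polynomial.eval_pow,
      Polynomial.eval_X] at h1
    rcases mul_eq_zero.mp h1 with h' | h'
    · exact hx h'
    · exact pow_ne_zero _ hr h'
  · obtain ⟨i, j, hij, x, y, hx, hy, rfl⟩ := Polynomial.card_support_eq_two.mp h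
    simp only [Polynomial.eval_add, Polynomial.eval_mul, Polynomial.eval_C,
      Polynomial.eval_pow, Polynomial.eval_X] at h1
    simp only [Polynomial.derivative_add, Polynomial.derivative_C_mul,
      Polynomial.derivative_X_pow, Polynomial.eval_add, Polynomial.eval_mul,
      Polynomial.eval_C, Polynomial.eval_pow, Polynomial.eval_X] at h2
    have h3 : x * ((i : F) * r ^ (i - 1) * r) + y * ((j : F) * r ^ (j - 1) * r) = 0 := by
      linear_combination r * h2
    rw [aux_pow_pred_mul, aux_pow_pred_mul] at h3
    have h4 : ((j : F) - (i : F)) * (y * r ^ j) = 0 := by linear_combination h3 - (i : F) * h1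
    rcases mul_eq_zero.mp h4 with h' | h'
    · exact absurd (Nat.cast_inj.mp (sub_eq_zero.mp h')) (by omega)
    · rcases mul_eq_zero.mp h' with h'' | h''
      · exact hy h''
      · exact pow_ne_zero _ hr h''

private lemma aux_sum_ne_zero {n : ℕ} (b : Fin n → ℝ) (i0 : Fin n) (h : b i0 ≠ 0) :
    (∑ i, C (b i) * X i : MvPolynomial (Fin n) ℝ) ≠ 0 := by
  intro h0
  have h1 := congrArg (eval (fun j => if j = i0 then (1 : ℝ) else 0)) h0
  simp only [map_sum, eval_mul, eval_C, eval_X, map_zero] at h1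
  rw [Finset.sum_eq_single i0] at h1
  · simp at h1
    exact h h1
  · intro i _ hne
    simp [hne]
  · simp

/-- Counting monomials of a multivariate polynomial through `finSuccEquiv`. -/
private lemma aux_card_support {R : Type*} [CommSemiring R] {n : ℕ}
    (g : MvPolynomial (Fin (n + 1)) R) :
    g.support.card = ∑ s ∈ (finSuccEquiv R n g).support,
      ((Polynomial.coeff (finSuccEquiv R n g) s).support).card := by
  classical
  rw [← Finset.card_sigma]
  refine (Finset.card_bij (fun x _ => Finsupp.cons x.1 x.2) ?_ ?_ ?_).symm
  · rintro ⟨s, d⟩ hx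
    simp only [Finset.mem_sigma] at hx
    exact mem_support_coeff_finSuccEquiv.mp hx.2
  · rintro ⟨s, d⟩ hs ⟨t, e⟩ ht hef
    have h0 : s = t := by
      have := congrArg (fun f => f 0) hef
      simpa [Finsupp.cons_zero] using this
    subst h0
    have h1 : d = e := by
      have := congrArg Finsupp.tail hef
      simpa [Finsupp.tail_cons] using this
    simp [h1]
  · intro c hc
    have hmem : Finsupp.tail c ∈ (Polynomial.coeff (finSuccEquiv R n g) (c 0)).support := by
      rw [mem_support_coeff_finSuccEquiv, Finsupp.cons_tail]
      exact hc
    refine ⟨⟨c 0, Finsupp.tail c⟩, ?_, Finsupp.cons_tail c⟩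
    simp only [Finset.mem_sigma]
    refine ⟨?_, hmem⟩
    rw [Polynomial.mem_support_iff]
    intro hz
    rw [hz] at hmem
    simp at hmem


private lemma aux_field {F : Type*} [Field F] [CharZero F] {c w : F} (hc : c ≠ 0) (hw : w ≠ 0)
    {m : ℕ} (hm : 2 ≤ m) {q : Polynomial F} (hq : q ≠ 0)
    (hcard : ((Polynomial.C c * Polynomial.X + Polynomial.C w) ^ m * q).support.card ≤ 2) :
    False := by
  have hr : -(w / c) ≠ 0 := by simp [div_eq_zero_iff, hc, hw]
  have hlin : Polynomial.C c * Polynomial.X + Polynomial.C w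
      = Polynomial.C c * (Polynomial.X - Polynomial.C (-(w / c))) := by
    rw [map_neg, sub_neg_eq_add, mul_add, ← Polynomial.C_mul, mul_div_cancel₀ _ hc]
  have hlin_ne : Polynomial.C c * Polynomial.X + Polynomial.C w ≠ 0 := by
    rw [hlin]
    exact mul_ne_zero (by simpa using hc) (Polynomial.X_sub_C_ne_zero _)
  have hp_ne : (Polynomial.C c * Polynomial.X + Polynomial.C w) ^ m * q ≠ 0 :=
    mul_ne_zero (pow_ne_zero _ hlin_ne) hq
  have hdvd : (Polynomial.X - Polynomial.C (-(w / c))) ^ 2 ∣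
      (Polynomial.C c * Polynomial.X + Polynomial.C w) ^ m * q := by
    rw [hlin, mul_pow]
    exact Dvd.dvd.mul_right (Dvd.dvd.mul_left (pow_dvd_pow _ hm) _) _
  exact absurd (aux_three_le_card hp_ne hr hdvd) (by omega)

private lemma aux_main (m : ℕ) (hm : 2 ≤ m) : ∀ (k : ℕ) (b : Fin (k + 1) → ℝ),
    (∀ i, b i ≠ 0) → ∀ Q : MvPolynomial (Fin (k + 1)) ℝ, Q ≠ 0 →
    2 * k + 1 ≤ (((∑ i, C (b i) * X i) ^ m * Q).support).card := by
  intro k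
  induction k with
  | zero =>
    intro b hb Q hQ
    have hP : (∑ i : Fin 1, C (b i) * X i) ^ m * Q ≠ 0 :=
      mul_ne_zero (pow_ne_zero _ (aux_sum_ne_zero b 0 (hb 0))) hQ
    simpa using Finset.card_pos.mpr (MvPolynomial.support_nonempty.mpr hP)
  | succ k IH =>
    intro b hb Q hQ
    set P := (∑ i : Fin (k + 2), C (b i) * X i) ^ m * Q with hPdef
    set f := finSuccEquiv ℝ (k + 1) P with hfdef
    set fQ := finSuccEquiv ℝ (k + 1) Q with hfQdef
    set W : MvPolynomial (Fin (k + 1)) ℝ := ∑ i : Fin (k + 1), C (b i.succ) * X i with hWdef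
    have hbeta_ne : W ≠ 0 := aux_sum_ne_zero _ 0 (hb _)
    have hfQ_ne : fQ ≠ 0 := by
      rw [hfQdef]
      intro h
      exact hQ ((finSuccEquiv ℝ (k + 1)).injective (by simpa using h))
    have hC : ∀ r : ℝ, finSuccEquiv ℝ (k + 1) (C r) = Polynomial.C (MvPolynomial.C r) := by
      intro r
      simp [finSuccEquiv_apply]
    have hL : finSuccEquiv ℝ (k + 1) (∑ i : Fin (k + 2), C (b i) * X i)
        = Polynomial.C (MvPolynomial.C (b 0)) * Polynomial.X + Polynomial.C W := by
      rw [map_sum, Fin.sum_univ_succ]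
      simp only [map_mul, hC, finSuccEquiv_X_zero, finSuccEquiv_X_succ]
      rw [hWdef, map_sum]
      congr 1
      refine Finset.sum_congr rfl fun i _ => ?_
      rw [map_mul]
    set g := (Polynomial.C (MvPolynomial.C (b 0)) * Polynomial.X + Polynomial.C W) ^ m with hgdef
    have hfsplit : f = g * fQ := by
      rw [hfdef, hPdef, map_mul, map_pow, hL, hfQdef, hgdef]
    have hg_const : g.coeff 0 = W ^ m := by
      rw [hgdef, Polynomial.coeff_zero_eq_eval_zero]
      simp
    have hg0 : g.coeff 0 ≠ 0 := by
      rw [hg_const]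
      exact pow_ne_zero _ hbeta_ne
    have hg_ne : g ≠ 0 := fun h => hg0 (by rw [h]; simp)
    have hg_nt : g.natTrailingDegree = 0 :=
      Polynomial.natTrailingDegree_eq_zero.mpr (Or.inr hg0)
    set e := fQ.natTrailingDegree with hedef
    have hR_ne : fQ.coeff e ≠ 0 := by
      rw [hedef]
      exact Polynomial.trailingCoeff_nonzero_iff_nonzero.mpr hfQ_ne
    have hcoeff_e : f.coeff e = W ^ m * fQ.coeff e := by
      have h := Polynomial.coeff_mul_natTrailingDegree_add_natTrailingDegree (p := g) (q := fQ)
      rw [hg_nt, zero_add] at h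
      rw [← hfsplit, ← hedef] at h
      rw [h]
      unfold Polynomial.trailingCoeff
      rw [hg_nt, hg_const, hedef]
    have hIH : 2 * k + 1 ≤ ((W ^ m * fQ.coeff e).support).card := by
      have := IH (fun i => b i.succ) (fun i => hb _) (fQ.coeff e) hR_ne
      rwa [← hWdef] at this
    have he_mem : e ∈ f.support := by
      rw [Polynomial.mem_support_iff, hcoeff_e]
      exact mul_ne_zero (pow_ne_zero _ hbeta_ne) hR_ne
    have hextra : 2 ≤ ∑ s ∈ f.support.erase e, ((f.coeff s).support).card := by
      by_contra hlt
      push_neg at hlt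
      have hone : ∀ s ∈ f.support.erase e, 1 ≤ ((f.coeff s).support).card := by
        intro s hs
        have hcs : f.coeff s ≠ 0 := Polynomial.mem_support_iff.mp (Finset.mem_of_mem_erase hs)
        exact Finset.card_pos.mpr (MvPolynomial.support_nonempty.mpr hcs)
      have hcard_erase : (f.support.erase e).card ≤ 1 := by
        have h := Finset.card_nsmul_le_sum (f.support.erase e)
          (fun s => ((f.coeff s).support).card) 1 hone
        simp only [smul_eq_mul, mul_one] at h
        omega
      have hsupp2 : f.support.card ≤ 2 := by
        have h := Finset.card_erase_add_one he_mem
        omega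
      set K := FractionRing (MvPolynomial (Fin (k + 1)) ℝ) with hKdef
      have hinj : Function.Injective (algebraMap (MvPolynomial (Fin (k + 1)) ℝ) K) :=
        IsFractionRing.injective _ _
      haveI : CharZero K := charZero_of_injective_algebraMap hinj
      have hf_ne : f ≠ 0 := fun h => by simp [h] at he_mem
      have hCb0 : (MvPolynomial.C (b 0) : MvPolynomial (Fin (k + 1)) ℝ) ≠ 0 := by
        simpa using hb 0
      have hmap_ne : ∀ x : MvPolynomial (Fin (k + 1)) ℝ, x ≠ 0 →
          algebraMap (MvPolynomial (Fin (k + 1)) ℝ) K x ≠ 0 :=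
        fun x hx h => hx (hinj (h.trans (map_zero _).symm))
      have hp_card :
          ((Polynomial.map (algebraMap (MvPolynomial (Fin (k + 1)) ℝ) K) f).support).card ≤ 2 :=
        le_trans (Finset.card_le_card (Polynomial.support_map_subset _ _)) hsupp2
      have hp_eq : Polynomial.map (algebraMap (MvPolynomial (Fin (k + 1)) ℝ) K) f
          = (Polynomial.C (algebraMap (MvPolynomial (Fin (k + 1)) ℝ) K (MvPolynomial.C (b 0)))
              * Polynomial.X
              + Polynomial.C (algebraMap (MvPolynomial (Fin (k + 1)) ℝ) K W)) ^ m
            * Polynomial.map (algebraMap (MvPolynomial (Fin (k + 1)) ℝ) K) fQ := by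
        rw [hfsplit, Polynomial.map_mul, hgdef, Polynomial.map_pow, Polynomial.map_add,
          Polynomial.map_mul, Polynomial.map_C, Polynomial.map_X, Polynomial.map_C]
      exact aux_field (hmap_ne _ hCb0) (hmap_ne _ hbeta_ne) hm
        ((Polynomial.map_ne_zero_iff hinj).mpr hfQ_ne) (by rw [← hp_eq]; exact hp_card)
    calc 2 * (k + 1) + 1 = (2 * k + 1) + 2 := by ring
      _ ≤ ((f.coeff e).support).card + ∑ s ∈ f.support.erase e, ((f.coeff s).support).card := by
          apply add_le_add _ hextra
          rw [hcoeff_e]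
          exact hIH
      _ = ∑ s ∈ f.support, ((f.coeff s).support).card := Finset.add_sum_erase _ (fun s => ((f.coeff s).support).card) he_mem
      _ = P.support.card := (aux_card_support P).symm

/-- If `m ≥ 2`, all `bᵢ ≠ 0` and `Q` is a nonzero homogeneous polynomial
with nonnegative coefficients, then `P = (b₁x₁ + ⋯ + b_kx_k)^m * Q` has at least `2k - 1`
monomials. -/
theorem statement1 (k m : ℕ) (hk : 1 ≤ k) (hm : 2 ≤ m)
    (b : Fin k → ℝ) (hb : ∀ i, b i ≠ 0)
    (Q : MvPolynomial (Fin k) ℝ) (hQ0 : Q ≠ 0)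
    (n : ℕ) (hhom : Q.IsHomogeneous n)
    (hnonneg : ∀ d, 0 ≤ Q.coeff d) :
    2 * k - 1 ≤ (((∑ i : Fin k, C (b i) * X i) ^ m * Q).support).card := by
  obtain ⟨k', rfl⟩ : ∃ k', k = k' + 1 := ⟨k - 1, by omega⟩
  have h := aux_main m hm k' b hb Q hQ0
  omega
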